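/- Let A ⊆ 𝔸ⁿ be a union of m pairwise distinct affine hyperplanes (i.e., d = n−1), where for each i ∈ {1,…,n} exactly m_i components have minimal free variables {X_j : j ≠ i} (so Σ m_i = m). Then with respect to any term order with X₁ < … < Xₙ, the standard set of the vanishing ideal I(A) equals ⋃_{i=1}^{n} ⋃_{ℓ=0}^{m_i−1} (ℓ·e_i + ⊕_{j ≠ i} ℕe_j). -/

import Mathlib

set_option maxHeartbeats 1000000

open MvPolynomial

/-- `β` is the leading exponent of `f` with respect to the monomial order `m`. -/
def IsLeadExp {σ : Type*} {k : Type*} [CommSemiring k] (m : MonomialOrder σ)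
    (f : MvPolynomial σ k) (β : σ →₀ ℕ) : Prop :=
  β ∈ f.support ∧ ∀ α ∈ f.support, α ≠ β → m.toSyn α < m.toSyn β

/-- `C(I)`: the set of leading exponents of nonzero elements of the ideal `I`. -/
def expC {σ : Type*} {k : Type*} [CommSemiring k] (m : MonomialOrder σ)
    (I : Ideal (MvPolynomial σ k)) : Set (σ →₀ ℕ) :=
  {β | ∃ f ∈ I, IsLeadExp m f β}

/-- `D(I)`: the standard set (set of exponents of standard monomials) of the ideal `I`. -/
def expD {σ : Type*} {k : Type*} [CommSemiring k] (m : MonomialOrder σ)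
    (I : Ideal (MvPolynomial σ k)) : Set (σ →₀ ℕ) :=
  (expC m I)ᶜ

section General

variable {σ : Type*} {k : Type*} [Field k] (m : MonomialOrder σ)

lemma toSyn_pos' {β : σ →₀ ℕ} (h : β ≠ 0) : 0 < m.toSyn β := by
  rcases lt_or_eq_of_le (show (0 : m.syn) ≤ m.toSyn β by
      simpa using (bot_le : (⊥ : m.syn) ≤ m.toSyn β)) with h' | h'
  · exact h'
  · exact absurd (m.toSyn.injective (by simpa using h'.symm)) h

lemma isLeadExp_unique {f : MvPolynomial σ k} {β β' : σ →₀ ℕ}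
    (h : IsLeadExp m f β) (h' : IsLeadExp m f β') : β = β' := by
  by_contra hne
  exact lt_irrefl _ ((h.2 β' h'.1 (Ne.symm hne)).trans (h'.2 β h.1 hne))

lemma exists_isLeadExp {f : MvPolynomial σ k} (hf : f ≠ 0) : ∃ β, IsLeadExp m f β := by
  obtain ⟨β, hβ, hmax⟩ := Finset.exists_max_image f.support (fun α => m.toSyn α)
    (by simpa using hf)
  exact ⟨β, hβ, fun α hα hne => lt_of_le_of_ne (hmax α hα)
    (fun h => hne (m.toSyn.injective h))⟩

lemma isLeadExp_monomial {β : σ →₀ ℕ} {a : k} (ha : a ≠ 0) :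
    IsLeadExp m (monomial β a) β := by
  classical
  constructor
  · rw [mem_support_iff, coeff_monomial, if_pos rfl]; exact ha
  · intro α hα hne
    rw [mem_support_iff, coeff_monomial] at hα
    rcases eq_or_ne β α with h | h
    · exact absurd h.symm hne
    · rw [if_neg h] at hα; exact absurd rfl hα

lemma isLeadExp_one : IsLeadExp m (1 : MvPolynomial σ k) 0 := by
  have := isLeadExp_monomial (σ := σ) m (β := 0) (a := (1 : k)) one_ne_zero
  rwa [monomial_zero'] at this

lemma IsLeadExp.le_of_mem {f : MvPolynomial σ k} {β α : σ →₀ ℕ}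
    (h : IsLeadExp m f β) (hα : α ∈ f.support) : m.toSyn α ≤ m.toSyn β := by
  rcases eq_or_ne α β with rfl | hne
  · exact le_rfl
  · exact (h.2 α hα hne).le

lemma isLeadExp_mul [DecidableEq σ] {f g : MvPolynomial σ k} {β γ : σ →₀ ℕ}
    (hf : IsLeadExp m f β) (hg : IsLeadExp m g γ) : IsLeadExp m (f * g) (β + γ) := by
  classical
  have hcoeff : coeff (β + γ) (f * g) = coeff β f * coeff γ g := by
    rw [coeff_mul]
    apply Finset.sum_eq_single_of_mem (β, γ) (by rw [Finset.HasAntidiagonal.mem_antidiagonal])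
    rintro ⟨u, v⟩ huv hne
    rw [Finset.HasAntidiagonal.mem_antidiagonal] at huv
    by_cases hu : u ∈ f.support
    · by_cases hv : v ∈ g.support
      · exfalso
        have hlt : m.toSyn u + m.toSyn v < m.toSyn β + m.toSyn γ := by
          rcases eq_or_ne u β with rfl | hne'
          · have : v ≠ γ := by
              intro h; exact hne (by rw [h])
            exact add_lt_add_of_le_of_lt le_rfl (hg.2 v hv this)
          · exact add_lt_add_of_lt_of_le (hf.2 u hu hne') (hg.le_of_mem m hv)
        rw [← map_add, ← map_add, huv] at hlt
        exact lt_irrefl _ hlt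
      · rw [notMem_support_iff.mp hv, mul_zero]
    · rw [notMem_support_iff.mp hu, zero_mul]
  constructor
  · rw [mem_support_iff, hcoeff]
    exact mul_ne_zero (mem_support_iff.mp hf.1) (mem_support_iff.mp hg.1)
  · intro α hα hne
    obtain ⟨u, hu, v, hv, rfl⟩ := Finset.mem_add.mp (support_mul f g hα)
    rcases eq_or_ne u β with rfl | hne'
    · have hvγ : v ≠ γ := fun h => hne (by rw [h])
      rw [map_add, map_add]
      exact add_lt_add_of_le_of_lt le_rfl (hg.2 v hv hvγ)
    · rw [map_add, map_add]
      exact add_lt_add_of_lt_of_le (hf.2 u hu hne') (hg.le_of_mem m hv)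

lemma isLeadExp_prod [DecidableEq σ] {ι : Type*} (s : Finset ι) (f : ι → MvPolynomial σ k)
    (d : ι → σ →₀ ℕ) (h : ∀ i ∈ s, IsLeadExp m (f i) (d i)) :
    IsLeadExp m (∏ i ∈ s, f i) (∑ i ∈ s, d i) := by
  classical
  induction s using Finset.induction_on with
  | empty => simpa using isLeadExp_one m
  | @insert a s ha ih =>
    rw [Finset.prod_insert ha, Finset.sum_insert ha]
    exact isLeadExp_mul m (h a (Finset.mem_insert_self a s))
      (ih fun i hi => h i (Finset.mem_insert_of_mem hi))

lemma eq_C_of_isLeadExp_zero {u : MvPolynomial σ k} (h : IsLeadExp m u 0) :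
    u = C (coeff 0 u) := by
  classical
  ext α
  rcases eq_or_ne α 0 with rfl | hne
  · simp
  · rw [coeff_C, if_neg (by exact fun hh => hne hh.symm)]
    by_contra hc
    have := h.2 α (mem_support_iff.mpr hc) hne
    simp only [map_zero] at this
    exact absurd this (not_lt_of_ge (by simpa using (bot_le : (⊥ : m.syn) ≤ m.toSyn α)))

lemma isUnit_eq_C [DecidableEq σ] (m : MonomialOrder σ) {u : MvPolynomial σ k} (hu : IsUnit u) :
    ∃ a : k, a ≠ 0 ∧ u = C a := by
  obtain ⟨U, rfl⟩ := hu
  obtain ⟨v, hv⟩ : ∃ v, (U : MvPolynomial σ k) * v = 1 := ⟨↑U⁻¹, by exact_mod_cast U.mul_inv⟩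
  set u := (U : MvPolynomial σ k) with hudef
  have hu0 : u ≠ 0 := fun h => by simp [h] at hv
  have hv0 : v ≠ 0 := fun h => by simp [h] at hv
  obtain ⟨β, hβ⟩ := exists_isLeadExp m hu0
  obtain ⟨γ, hγ⟩ := exists_isLeadExp m hv0
  have h1 : IsLeadExp m (u * v) (β + γ) := isLeadExp_mul m hβ hγ
  rw [hv] at h1
  have h0 : β + γ = 0 := isLeadExp_unique m h1 (isLeadExp_one m)
  have hβ0 : β = 0 := by
    ext x
    have := DFunLike.congr_fun h0 x
    simp only [Finsupp.add_apply, Finsupp.coe_zero, Pi.zero_apply] at this ⊢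
    omega
  rw [hβ0] at hβ
  refine ⟨coeff 0 u, mem_support_iff.mp hβ.1, eq_C_of_isLeadExp_zero m hβ⟩

end General


section Linear

variable {k : Type*} [Field k] {n : ℕ}

/-- The linear polynomial of a hyperplane. -/
noncomputable def Lpoly (i : Fin n) (bb : Fin n → k) (cc : k) : MvPolynomial (Fin n) k :=
  X i + ∑ j ∈ Finset.univ.filter (fun j => j < i), C (bb j) * X j + C cc

lemma single_one_ne_zero {i : Fin n} : (Finsupp.single i 1 : Fin n →₀ ℕ) ≠ 0 :=
  fun h => one_ne_zero (Finsupp.single_eq_zero.mp h)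

lemma single_one_inj {i j : Fin n} (h : (Finsupp.single i 1 : Fin n →₀ ℕ) = Finsupp.single j 1) :
    i = j := by
  rcases (Finsupp.single_eq_single_iff _ _ _ _).mp h with h' | h'
  · exact h'.1
  · exact absurd h'.1 one_ne_zero

lemma eval_Lpoly (i : Fin n) (bb : Fin n → k) (cc : k) (x : Fin n → k) :
    eval x (Lpoly i bb cc) =
      x i + ∑ j ∈ Finset.univ.filter (fun j => j < i), bb j * x j + cc := by
  simp [Lpoly]

lemma coeff_Lpoly (i : Fin n) (bb : Fin n → k) (cc : k)
    (α : Fin n →₀ ℕ) :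
    coeff α (Lpoly i bb cc) =
      (if Finsupp.single i 1 = α then (1 : k) else 0) +
      (∑ j ∈ Finset.univ.filter (fun j => j < i),
        bb j * if Finsupp.single j 1 = α then (1 : k) else 0) +
      (if 0 = α then cc else 0) := by
  rw [Lpoly, coeff_add, coeff_add, MvPolynomial.coeff_sum]
  congr 1
  · congr 1
    · exact coeff_X' i α
    · exact Finset.sum_congr rfl fun j _ => by rw [coeff_C_mul, coeff_X' j α]
  · exact coeff_C α cc

lemma coeff_Lpoly_self (i : Fin n) (bb : Fin n → k) (cc : k) :
    coeff (Finsupp.single i 1) (Lpoly i bb cc) = 1 := by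
  classical
  rw [coeff_Lpoly, if_pos rfl, if_neg (fun h => single_one_ne_zero h.symm),
    Finset.sum_eq_zero, add_zero, add_zero]
  intro j hj
  rw [if_neg, mul_zero]
  exact fun h => absurd (single_one_inj h) (ne_of_lt (Finset.mem_filter.mp hj).2)

lemma coeff_Lpoly_gt {i j : Fin n} (bb : Fin n → k) (cc : k) (hij : i < j) :
    coeff (Finsupp.single j 1) (Lpoly i bb cc) = 0 := by
  classical
  rw [coeff_Lpoly, if_neg (fun h => absurd (single_one_inj h) (ne_of_lt hij)),
    if_neg (fun h => single_one_ne_zero h.symm), Finset.sum_eq_zero, add_zero, add_zero]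
  intro j' hj'
  rw [if_neg, mul_zero]
  exact fun h => absurd ((single_one_inj h) ▸ (Finset.mem_filter.mp hj').2) (lt_asymm hij)

lemma Lpoly_ne_zero (i : Fin n) (bb : Fin n → k) (cc : k) : Lpoly i bb cc ≠ 0 := by
  intro h
  have := coeff_Lpoly_self i bb cc
  rw [h] at this
  simp at this

lemma support_Lpoly {i : Fin n} {bb : Fin n → k} {cc : k} {α : Fin n →₀ ℕ}
    (hα : α ∈ (Lpoly i bb cc).support) :
    α = Finsupp.single i 1 ∨ α = 0 ∨ ∃ j, j < i ∧ α = Finsupp.single j 1 := by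
  classical
  by_contra hc
  push_neg at hc
  obtain ⟨h1, h2, h3⟩ := hc
  apply mem_support_iff.mp hα
  rw [coeff_Lpoly, if_neg (fun h => h1 h.symm), if_neg (fun h => h2 h.symm),
    Finset.sum_eq_zero, add_zero, add_zero]
  intro j hj
  rw [if_neg (fun h => h3 j (Finset.mem_filter.mp hj).2 h.symm), mul_zero]

lemma isLeadExp_Lpoly (m : MonomialOrder (Fin n)) (i : Fin n) (bb : Fin n → k) (cc : k)
    (hv : ∀ j : Fin n, j < i → m.toSyn (Finsupp.single j 1) < m.toSyn (Finsupp.single i 1)) :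
    IsLeadExp m (Lpoly i bb cc) (Finsupp.single i 1) := by
  constructor
  · rw [mem_support_iff, coeff_Lpoly_self]; exact one_ne_zero
  · intro α hα hne
    rcases support_Lpoly hα with h | h | ⟨j, hj, h⟩
    · exact absurd h hne
    · rw [h]
      simpa using toSyn_pos' m (single_one_ne_zero (i := i))
    · rw [h]; exact hv j hj

end Linear

section Prime

variable {k : Type*} [Field k] {n : ℕ}

/-- Substitution killing the linear form. -/
noncomputable def subst (i : Fin n) (bb : Fin n → k) (cc : k) :
    MvPolynomial (Fin n) k →ₐ[k] MvPolynomial (Fin n) k :=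
  bind₁ (fun j => if j = i then
    (X i - Lpoly i bb cc : MvPolynomial (Fin n) k) else X j)

lemma subst_X_self (i : Fin n) (bb : Fin n → k) (cc : k) :
    subst i bb cc (X i) = X i - Lpoly i bb cc := by
  rw [subst, bind₁_X_right, if_pos rfl]

lemma subst_X_ne (i : Fin n) (bb : Fin n → k) (cc : k) {j : Fin n} (hj : j ≠ i) :
    subst i bb cc (X j) = X j := by
  rw [subst, bind₁_X_right, if_neg hj]

lemma subst_Lpoly (i : Fin n) (bb : Fin n → k) (cc : k) :
    subst i bb cc (Lpoly i bb cc) = 0 := by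
  have hXr : (X i - Lpoly i bb cc : MvPolynomial (Fin n) k) =
      -(∑ j ∈ Finset.univ.filter (fun j => j < i), C (bb j) * X j + C cc) := by
    rw [Lpoly]; ring
  rw [Lpoly, map_add, map_add, subst_X_self, map_sum]
  rw [show ∑ j ∈ Finset.univ.filter (fun j => j < i), subst i bb cc (C (bb j) * X j)
      = ∑ j ∈ Finset.univ.filter (fun j => j < i), C (bb j) * X j from
    Finset.sum_congr rfl fun j hj => by
      rw [map_mul, subst_X_ne i bb cc (ne_of_lt (Finset.mem_filter.mp hj).2),
        show (subst i bb cc) (C (bb j)) = C (bb j) from by simp [subst]]]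
  rw [show subst i bb cc (C cc) = C cc from by simp [subst]]
  rw [hXr]; ring

lemma Lpoly_dvd_sub_subst (i : Fin n) (bb : Fin n → k) (cc : k)
    (f : MvPolynomial (Fin n) k) :
    Lpoly i bb cc ∣ (f - subst i bb cc f) := by
  induction f using MvPolynomial.induction_on with
  | C a => simp [subst]
  | add p q hp hq =>
    rw [map_add]
    have : p + q - (subst i bb cc p + subst i bb cc q)
        = (p - subst i bb cc p) + (q - subst i bb cc q) := by ring
    rw [this]
    exact dvd_add hp hq
  | mul_X p j hp =>
    rw [map_mul]
    have : p * X j - subst i bb cc p * subst i bb cc (X j)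
        = (p - subst i bb cc p) * X j
          + subst i bb cc p * (X j - subst i bb cc (X j)) := by ring
    rw [this]
    apply dvd_add (Dvd.dvd.mul_right hp _)
    rcases eq_or_ne j i with rfl | hj
    · rw [subst_X_self]
      have : (X j - (X j - Lpoly j bb cc) : MvPolynomial (Fin n) k) = Lpoly j bb cc := by ring
      rw [this]
      exact Dvd.dvd.mul_left dvd_rfl _
    · rw [subst_X_ne i bb cc hj, sub_self, mul_zero]
      exact dvd_zero _

lemma dvd_of_subst_eq_zero {i : Fin n} {bb : Fin n → k} {cc : k}
    {f : MvPolynomial (Fin n) k} (h : subst i bb cc f = 0) : Lpoly i bb cc ∣ f := by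
  have := Lpoly_dvd_sub_subst i bb cc f
  rwa [h, sub_zero] at this

lemma ker_subst (i : Fin n) (bb : Fin n → k) (cc : k) :
    RingHom.ker (subst i bb cc : MvPolynomial (Fin n) k →ₐ[k] MvPolynomial (Fin n) k)
      = Ideal.span {Lpoly i bb cc} := by
  apply le_antisymm
  · intro f hf
    rw [RingHom.mem_ker] at hf
    rw [Ideal.mem_span_singleton]
    exact dvd_of_subst_eq_zero hf
  · rw [Ideal.span_le, Set.singleton_subset_iff]
    exact subst_Lpoly i bb cc

lemma prime_Lpoly (i : Fin n) (bb : Fin n → k) (cc : k) : Prime (Lpoly i bb cc) := by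
  rw [← Ideal.span_singleton_prime (Lpoly_ne_zero i bb cc), ← ker_subst i bb cc]
  exact RingHom.ker_isPrime _

lemma eval_subst (i : Fin n) (bb : Fin n → k) (cc : k) (f : MvPolynomial (Fin n) k)
    (x : Fin n → k) :
    eval x (subst i bb cc f) =
      eval (fun j => if j = i then (eval x (X i - Lpoly i bb cc)) else x j) f := by
  rw [subst]
  have : eval x (bind₁ (fun j => if j = i then
      (X i - Lpoly i bb cc : MvPolynomial (Fin n) k) else X j) f)
      = eval (fun j => eval x (if j = i then
        (X i - Lpoly i bb cc : MvPolynomial (Fin n) k) else X j)) f :=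
    eval₂Hom_bind₁ _ _ _ _
  rw [this]
  have hfun : (fun j => eval x (if j = i then
      (X i - Lpoly i bb cc : MvPolynomial (Fin n) k) else X j))
      = (fun j => if j = i then (eval x (X i - Lpoly i bb cc)) else x j) := by
    funext j
    rcases eq_or_ne j i with rfl | hj
    · rw [if_pos rfl, if_pos rfl]
    · rw [if_neg hj, if_neg hj, eval_X]
  rw [hfun]

end Prime

section ProdDvd

lemma prod_dvd_of_pairwise {R : Type*} [CommRing R] [IsDomain R] {ι : Type*}
    [DecidableEq ι] (s : Finset ι) (L : ι → R) (f : R)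
    (hp : ∀ l, Prime (L l))
    (hna : ∀ l l', Associated (L l) (L l') → l = l')
    (hd : ∀ l ∈ s, L l ∣ f) : (∏ l ∈ s, L l) ∣ f := by
  induction s using Finset.induction_on generalizing f with
  | empty => simpa using one_dvd f
  | @insert a s ha ih =>
    obtain ⟨g, hg⟩ := hd a (Finset.mem_insert_self a s)
    rw [Finset.prod_insert ha, hg]
    apply mul_dvd_mul_left
    apply ih
    intro l hl
    have hdl : L l ∣ L a * g := hg ▸ hd l (Finset.mem_insert_of_mem hl)
    rcases (hp l).2.2 _ _ hdl with h | h
    · exact absurd (hna l a ((hp l).associated_of_dvd (hp a) h)) (fun he => ha (he ▸ hl))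
    · exact h

end ProdDvd

theorem expD_union_hyperplanes {k : Type*} [Field k] [Infinite k] {n : ℕ} {mm : ℕ}
    (m : MonomialOrder (Fin n))
    (hvar : ∀ i j : Fin n, i < j →
      m.toSyn (Finsupp.single i 1) < m.toSyn (Finsupp.single j 1))
    (idx : Fin mm → Fin n) (b : Fin mm → Fin n → k) (c : Fin mm → k)
    (hb : ∀ ℓ : Fin mm, ∀ j : Fin n, ¬ j < idx ℓ → b ℓ j = 0)
    (H : Fin mm → Set (Fin n → k))
    (hH : ∀ ℓ : Fin mm, H ℓ = {x : Fin n → k |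
      x (idx ℓ) + ∑ j ∈ Finset.univ.filter (fun j => j < idx ℓ), b ℓ j * x j + c ℓ = 0})
    (hdist : ∀ ℓ ℓ' : Fin mm, H ℓ = H ℓ' → ℓ = ℓ') :
    expD m (MvPolynomial.vanishingIdeal k (⋃ ℓ, H ℓ)) =
      ⋃ i : Fin n,
        ⋃ ℓ ∈ Finset.range ((Finset.univ.filter (fun l => idx l = i)).card),
          {β : Fin n →₀ ℕ | β i = ℓ} := by
  classical
  set I := MvPolynomial.vanishingIdeal k (⋃ ℓ, H ℓ) with hI
  set L : Fin mm → MvPolynomial (Fin n) k := fun ℓ => Lpoly (idx ℓ) (b ℓ) (c ℓ) with hL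
  set cnt : Fin n → ℕ := fun i => (Finset.univ.filter (fun l => idx l = i)).card with hcnt
  -- hyperplanes as zero sets of the linear forms
  have hHL : ∀ ℓ, H ℓ = {x : Fin n → k | eval x (L ℓ) = 0} := by
    intro ℓ
    rw [hH ℓ]
    ext x
    simp only [Set.mem_setOf_eq, hL, eval_Lpoly]
  -- the leading exponents of the linear forms
  have hlead : ∀ ℓ, IsLeadExp m (L ℓ) (Finsupp.single (idx ℓ) 1) := fun ℓ =>
    isLeadExp_Lpoly m (idx ℓ) (b ℓ) (c ℓ) (fun j hj => hvar j (idx ℓ) hj)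
  -- the product of the linear forms and its leading exponent
  set F : MvPolynomial (Fin n) k := ∏ ℓ ∈ Finset.univ, L ℓ with hF
  set μ : Fin n →₀ ℕ := ∑ ℓ ∈ Finset.univ, Finsupp.single (idx ℓ) 1 with hμdef
  have hFlead : IsLeadExp m F μ :=
    isLeadExp_prod m Finset.univ L (fun ℓ => Finsupp.single (idx ℓ) 1)
      (fun ℓ _ => hlead ℓ)
  have hμ : ∀ i, μ i = cnt i := by
    intro i
    show (∑ ℓ ∈ Finset.univ, (Finsupp.single (idx ℓ) 1 : Fin n →₀ ℕ)) i
      = (Finset.univ.filter (fun l => idx l = i)).card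
    rw [Finset.card_filter]
    rw [show ((∑ ℓ ∈ Finset.univ, Finsupp.single (idx ℓ) 1 : Fin n →₀ ℕ)) i
        = ∑ ℓ ∈ Finset.univ, (Finsupp.single (idx ℓ) 1 : Fin n →₀ ℕ) i from
      Finset.sum_apply' i]
    refine Finset.sum_congr rfl fun ℓ _ => ?_
    rw [Finsupp.single_apply]
  -- F belongs to the vanishing ideal
  have hFI : F ∈ I := by
    rw [hI, mem_vanishingIdeal_iff]
    intro x hx
    obtain ⟨s, ⟨ℓ₀, rfl⟩, hxs⟩ := hx
    rw [hF, map_prod]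
    apply Finset.prod_eq_zero (Finset.mem_univ ℓ₀)
    have hx0 : x ∈ H ℓ₀ := hxs
    rw [hHL ℓ₀] at hx0
    exact hx0
  -- every linear form divides every element of the ideal
  have hdvd : ∀ f ∈ I, ∀ ℓ, L ℓ ∣ f := by
    intro f hf ℓ
    apply dvd_of_subst_eq_zero (i := idx ℓ) (bb := b ℓ) (cc := c ℓ)
    apply MvPolynomial.funext
    intro x
    rw [map_zero, eval_subst]
    set y : Fin n → k := fun j => if j = idx ℓ then
      eval x (X (idx ℓ) - Lpoly (idx ℓ) (b ℓ) (c ℓ)) else x j with hy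
    have hyH : y ∈ H ℓ := by
      rw [hHL ℓ]
      show eval y (L ℓ) = 0
      rw [hL, eval_Lpoly]
      have h1 : y (idx ℓ) = eval x (X (idx ℓ) - Lpoly (idx ℓ) (b ℓ) (c ℓ)) := by
        rw [hy]; simp
      have h2 : ∀ j, j < idx ℓ → y j = x j := by
        intro j hj
        rw [hy]; simp only [if_neg (ne_of_lt hj)]
      have hsum : ∑ j ∈ Finset.univ.filter (fun j => j < idx ℓ), b ℓ j * y j
          = ∑ j ∈ Finset.univ.filter (fun j => j < idx ℓ), b ℓ j * x j :=
        Finset.sum_congr rfl fun j hj => by rw [h2 j (Finset.mem_filter.mp hj).2]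
      rw [h1, hsum, map_sub, eval_X, eval_Lpoly]
      ring
    rw [hI, mem_vanishingIdeal_iff] at hf
    exact hf y (Set.mem_iUnion.mpr ⟨ℓ, hyH⟩)
  -- the linear forms are pairwise non-associated
  have hassoc : ∀ ℓ ℓ', Associated (L ℓ) (L ℓ') → ℓ = ℓ' := by
    intro ℓ ℓ' hASS
    obtain ⟨u, hu⟩ := hASS
    obtain ⟨a, ha0, hua⟩ := isUnit_eq_C m u.isUnit
    rw [hua] at hu
    rcases lt_trichotomy (idx ℓ) (idx ℓ') with hlt | heq | hgt
    · exfalso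
      have h1 : coeff (Finsupp.single (idx ℓ') 1) (L ℓ') = 1 := coeff_Lpoly_self _ _ _
      rw [← hu, mul_comm, coeff_C_mul] at h1
      simp only [hL] at h1
      rw [coeff_Lpoly_gt _ _ hlt, mul_zero] at h1
      exact one_ne_zero h1.symm
    · have h1 : coeff (Finsupp.single (idx ℓ) 1) (L ℓ') = 1 := by
        show coeff (Finsupp.single (idx ℓ) 1) (Lpoly (idx ℓ') (b ℓ') (c ℓ')) = 1
        rw [← heq]
        exact coeff_Lpoly_self _ _ _
      rw [← hu, mul_comm, coeff_C_mul] at h1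
      simp only [hL] at h1
      rw [coeff_Lpoly_self, mul_one] at h1
      rw [h1, map_one, mul_one] at hu
      apply hdist
      rw [hHL, hHL, hu]
    · exfalso
      have h1 : coeff (Finsupp.single (idx ℓ) 1) (L ℓ') = 0 :=
        coeff_Lpoly_gt _ _ hgt
      rw [← hu, mul_comm, coeff_C_mul] at h1
      simp only [hL] at h1
      rw [coeff_Lpoly_self, mul_one] at h1
      exact ha0 h1
  -- the key identity for the cone of leading exponents
  have key : expC m I = {β : Fin n →₀ ℕ | ∀ i, cnt i ≤ β i} := by
    apply Set.eq_of_subset_of_subset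
    · rintro β ⟨f, hfI, hflead⟩
      have hf0 : f ≠ 0 := by
        intro h0
        have := hflead.1
        rw [h0] at this
        simp at this
      obtain ⟨g, hg⟩ : F ∣ f := by
        rw [hF]
        exact prod_dvd_of_pairwise Finset.univ L f
          (fun l => prime_Lpoly _ _ _) hassoc (fun l _ => hdvd f hfI l)
      have hg0 : g ≠ 0 := by
        intro h0; rw [h0, mul_zero] at hg; exact hf0 hg
      obtain ⟨γ, hγ⟩ := exists_isLeadExp m hg0
      have : IsLeadExp m f (μ + γ) := by
        rw [hg]; exact isLeadExp_mul m hFlead hγ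
      have hβ : β = μ + γ := isLeadExp_unique m hflead this
      intro i
      rw [hβ, Finsupp.add_apply, ← hμ i]
      exact Nat.le_add_right _ _
    · intro β hβ
      set g : MvPolynomial (Fin n) k := monomial (β - μ) 1 * F with hg
      have hgI : g ∈ I := Ideal.mul_mem_left _ _ hFI
      have hglead : IsLeadExp m g ((β - μ) + μ) :=
        isLeadExp_mul m (isLeadExp_monomial m one_ne_zero) hFlead
      have hsum : (β - μ) + μ = β := by
        ext i
        rw [Finsupp.add_apply, Finsupp.tsub_apply]
        have : μ i ≤ β i := (hμ i) ▸ hβ i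
        omega
      rw [hsum] at hglead
      exact ⟨g, hgI, hglead⟩
  -- conclusion
  rw [expD, key]
  ext β
  simp only [Set.mem_compl_iff, Set.mem_setOf_eq, not_forall, not_le, Set.mem_iUnion,
    Finset.mem_range, Set.mem_setOf_eq]
  constructor
  · rintro ⟨i, hi⟩
    exact ⟨i, β i, hi, rfl⟩
  · rintro ⟨i, l, hl, he⟩
    exact ⟨i, he ▸ hl⟩
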